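/- Let x ∈ ℝⁿ and Cᵢ ⊆ ℝⁿ (i = 1,…,m) nonempty closed convex with Cᵢ depending only on coordinates in Nᵢ, l_j = |{i : j ∈ Nᵢ}| ≥ 1, and let X = T⁻¹(x) ∈ 𝐂₂. Then T(P_{𝐂₂}(P_{𝐂₁}(X)))_j = (1/l_j) Σ_{i : j ∈ Nᵢ} (P_{Cᵢ}(x))_j for every j, i.e., one product-space Dykstra-style step reproduces the component-averaged projection. -/

import Mathlib

private lemma normsq {ι : Type*} [Fintype ι] (v : EuclideanSpace ℝ ι) :
    ‖v‖ ^ 2 = ∑ q, (v q) ^ 2 := by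
  rw [EuclideanSpace.norm_eq, Real.sq_sqrt (by positivity)]
  simp [sq_abs]

private lemma uniq_min {E : Type*} [NormedAddCommGroup E] [InnerProductSpace ℝ E]
    {S : Set E} (hS : Convex ℝ S) {u v w : E} (hv : v ∈ S) (hw : w ∈ S)
    (h1 : ∀ y ∈ S, ‖u - v‖ ≤ ‖u - y‖) (h2 : ∀ y ∈ S, ‖u - w‖ ≤ ‖u - y‖) : v = w := by
  have hm : (1/2 : ℝ) • v + (1/2 : ℝ) • w ∈ S :=
    hS hv hw (by norm_num) (by norm_num) (by norm_num)
  set m := (1/2 : ℝ) • v + (1/2 : ℝ) • w with hmdef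
  have hab : (u - v) + (u - w) = (2:ℝ) • (u - m) := by rw [hmdef]; module
  have hpar := parallelogram_law_with_norm ℝ (u - v) (u - w)
  have h1' := h1 m hm
  have h2' := h2 m hm
  have hsub : (u - v) - (u - w) = w - v := by abel
  have hn : ‖(u - v) + (u - w)‖ = 2 * ‖u - m‖ := by
    rw [hab, norm_smul]; simp
  rw [hsub, hn] at hpar
  have hz : ‖w - v‖ = 0 := by
    nlinarith [norm_nonneg (w - v), mul_self_le_mul_self (norm_nonneg (u - v)) h1',
      mul_self_le_mul_self (norm_nonneg (u - w)) h2']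
  exact (sub_eq_zero.mp (norm_eq_zero.mp hz)).symm

private lemma mean_min {ι : Type*} [DecidableEq ι] (s : Finset ι) (hs : s.Nonempty)
    (c : ι → ℝ) (b : ℝ) :
    ∑ i ∈ s, (c i - (∑ i ∈ s, c i) / s.card) ^ 2 ≤ ∑ i ∈ s, (c i - b) ^ 2 := by
  set a := (∑ i ∈ s, c i) / s.card with ha
  have hcard : (s.card : ℝ) ≠ 0 := Nat.cast_ne_zero.2 (Finset.card_ne_zero.2 hs)
  have hS : ∑ i ∈ s, c i = s.card * a := by rw [ha]; field_simp
  have key : ∑ i ∈ s, (c i - b) ^ 2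
      = ∑ i ∈ s, (c i - a) ^ 2 + s.card * (a - b) ^ 2 := by
    have h1 : ∀ i ∈ s, (c i - b)^2 = (c i - a)^2 + (2*c i - a - b)*(a-b) := by
      intro i _; ring
    rw [Finset.sum_congr rfl h1, Finset.sum_add_distrib]
    congr 1
    rw [← Finset.sum_mul]
    have h2 : ∑ i ∈ s, (2*c i - a - b) = (s.card:ℝ) * (a - b) := by
      rw [Finset.sum_sub_distrib, Finset.sum_sub_distrib, ← Finset.mul_sum, hS,
        Finset.sum_const, Finset.sum_const, nsmul_eq_mul, nsmul_eq_mul]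
      ring
    rw [h2]; ring
  nlinarith [sq_nonneg (a - b), Nat.cast_nonneg (α := ℝ) s.card, sq_nonneg ((s.card:ℝ)*(a-b))]

private lemma norm_le_of_sq {E : Type*} [NormedAddCommGroup E] {a b : E}
    (h : ‖a‖ ^ 2 ≤ ‖b‖ ^ 2) : ‖a‖ ≤ ‖b‖ :=
  le_of_pow_le_pow_left₀ (by norm_num) (norm_nonneg _) h

/-- `l_j`, the number of constraints `i` with `j ∈ Nᵢ`. -/
def lcount {m n : ℕ} (N : Fin m → Finset (Fin n)) (j : Fin n) : ℕ :=
  (Finset.univ.filter fun i => j ∈ N i).card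

/-- The basis matrix `V^{(k)}` with `V^{(k)}_{ij} = 1` iff `j = k` and `k ∈ Nᵢ`. -/
def Vmat {m n : ℕ} (N : Fin m → Finset (Fin n)) (k : Fin n) :
    EuclideanSpace ℝ (Fin m × Fin n) :=
  WithLp.toLp 2 fun q => if q.2 = k ∧ k ∈ N q.1 then 1 else 0

/-- The subspace `𝐂₂`. -/
def C2set {m n : ℕ} (N : Fin m → Finset (Fin n)) :
    Set (EuclideanSpace ℝ (Fin m × Fin n)) :=
  {X | (∀ i j, j ∉ N i → X (i, j) = 0) ∧
    ∀ i k j, j ∈ N i → j ∈ N k → X (i, j) = X (k, j)}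

/-- The set `𝐂₁ = ∏ᵢ Cᵢ` of matrices whose `i`-th row lies in `Cᵢ`. -/
def C1set {m n : ℕ} (C : Fin m → Set (EuclideanSpace ℝ (Fin n))) :
    Set (EuclideanSpace ℝ (Fin m × Fin n)) :=
  {X | ∀ i, WithLp.toLp 2 (fun j => X (i, j)) ∈ C i}

/-- The coefficient map `T`, realized on `𝐂₂` by column averaging. -/
noncomputable def Tmap {m n : ℕ} (N : Fin m → Finset (Fin n))
    (X : EuclideanSpace ℝ (Fin m × Fin n)) : EuclideanSpace ℝ (Fin n) :=
  WithLp.toLp 2 fun j => (∑ i ∈ Finset.univ.filter fun i => j ∈ N i, X (i, j)) / (lcount N j : ℝ)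

/-- One product-space Dykstra-style step reproduces the component-averaged projection:
for `X = T⁻¹ x ∈ 𝐂₂`, we have `T(P_{𝐂₂}(P_{𝐂₁}(X)))_j = (1/l_j) ∑_{i : j ∈ Nᵢ} (P_{Cᵢ} x)_j`. -/
theorem stmt8 {m n : ℕ} (N : Fin m → Finset (Fin n)) (hcov : ∀ j, ∃ i, j ∈ N i)
    (C : Fin m → Set (EuclideanSpace ℝ (Fin n)))
    (hne : ∀ i, (C i).Nonempty) (hcl : ∀ i, IsClosed (C i)) (hconv : ∀ i, Convex ℝ (C i))
    (hdep : ∀ i (x y : EuclideanSpace ℝ (Fin n)),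
      (∀ j ∈ N i, x j = y j) → (x ∈ C i ↔ y ∈ C i))
    (x : EuclideanSpace ℝ (Fin n))
    (X : EuclideanSpace ℝ (Fin m × Fin n)) (hX : X = ∑ j : Fin n, x j • Vmat N j)
    (P Z : EuclideanSpace ℝ (Fin m × Fin n))
    (hP : P ∈ C1set C ∧ ∀ W ∈ C1set C, ‖X - P‖ ≤ ‖X - W‖)
    (hZ : Z ∈ C2set N ∧ ∀ W ∈ C2set N, ‖P - Z‖ ≤ ‖P - W‖)
    (Q : Fin m → EuclideanSpace ℝ (Fin n))
    (hQ : ∀ i, Q i ∈ C i ∧ ∀ y ∈ C i, ‖x - Q i‖ ≤ ‖x - y‖) :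
    ∀ j, Tmap N Z j =
      (1 / (lcount N j : ℝ)) * ∑ i ∈ Finset.univ.filter fun i => j ∈ N i, Q i j := by
  classical
  -- values of X
  have hXval : ∀ i j, X (i, j) = if j ∈ N i then x j else 0 := by
    intro i j
    rw [hX]
    have h : (∑ k : Fin n, x k • Vmat N k) (i, j) = ∑ k : Fin n, x k * Vmat N k (i, j) := by
      rw [WithLp.ofLp_sum, Finset.sum_apply]; rfl
    rw [h]
    simp only [Vmat, mul_ite, mul_one, mul_zero, ite_and]
    rw [Finset.sum_ite_eq Finset.univ j (fun k => if k ∈ N i then x k else 0)]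
    simp
  set F : Fin n → Finset (Fin m) := fun j => Finset.univ.filter fun i => j ∈ N i with hFdef
  have hFne : ∀ j, (F j).Nonempty := by
    intro j
    obtain ⟨i, hi⟩ := hcov j
    exact ⟨i, by simp [hFdef, hi]⟩
  have hcardF : ∀ j, (F j).card = lcount N j := fun j => rfl
  have hlne : ∀ j, (lcount N j : ℝ) ≠ 0 := by
    intro j
    rw [← hcardF]
    exact Nat.cast_ne_zero.2 (Finset.card_ne_zero.2 (hFne j))
  -- apply-lemma for affine combos
  have happ : ∀ (a b : ℝ) (A B : EuclideanSpace ℝ (Fin m × Fin n)) (q : Fin m × Fin n),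
      (a • A + b • B) q = a * A q + b * B q := by intro a b A B q; rfl
  -- convexity of C1set
  have hC1conv : Convex ℝ (C1set C) := by
    intro A hA B hB a b ha hb hab
    intro i
    have h := hconv i (hA i) (hB i) ha hb hab
    have he : WithLp.toLp 2 (fun j => (a • A + b • B) (i, j))
        = a • (WithLp.toLp 2 (fun j => A (i, j)) : EuclideanSpace ℝ (Fin n))
          + b • (WithLp.toLp 2 (fun j => B (i, j)) : EuclideanSpace ℝ (Fin n)) := rfl
    rw [he]; exact h
  -- convexity of C2set
  have hC2conv : Convex ℝ (C2set N) := by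
    intro A hA B hB a b ha hb hab
    constructor
    · intro i j hj
      have := happ a b A B (i, j)
      rw [this, hA.1 i j hj, hB.1 i j hj]; ring
    · intro i k j hj hk
      rw [happ, happ, hA.2 i k j hj hk, hB.2 i k j hj hk]
  -- explicit formula for P
  set P' : EuclideanSpace ℝ (Fin m × Fin n) :=
    WithLp.toLp 2 (fun q => if q.2 ∈ N q.1 then Q q.1 q.2 else 0) with hP'def
  have hP'mem : P' ∈ C1set C := by
    intro i
    have : ∀ j ∈ N i, Q i j = (fun j => P' (i, j)) j := by
      intro j hj; simp [hP'def, hj]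
    exact (hdep i (Q i) _ this).mp (hQ i).1
  have hP'min : ∀ W ∈ C1set C, ‖X - P'‖ ≤ ‖X - W‖ := by
    intro W hW
    apply norm_le_of_sq
    rw [normsq, normsq]
    have hsub : ∀ (A B : EuclideanSpace ℝ (Fin m × Fin n)) (q : Fin m × Fin n),
        (A - B) q = A q - B q := fun A B q => rfl
    simp only [hsub]
    rw [Fintype.sum_prod_type, Fintype.sum_prod_type]
    apply Finset.sum_le_sum
    intro i _
    -- row-wise
    set w' : EuclideanSpace ℝ (Fin n) :=
      WithLp.toLp 2 (fun j => if j ∈ N i then W (i, j) else x j) with hw'def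
    have hw'mem : w' ∈ C i := by
      have : ∀ j ∈ N i, (fun j => W (i, j)) j = w' j := by
        intro j hj; simp [hw'def, hj]
      exact (hdep i _ w' this).mp (hW i)
    have step1 : ∑ j, (X (i, j) - P' (i, j)) ^ 2 ≤ ∑ j, (x j - Q i j) ^ 2 := by
      apply Finset.sum_le_sum
      intro j _
      rw [hXval]
      by_cases hj : j ∈ N i <;> simp [hP'def, hj] <;> positivity
    have step2 : ∑ j, (x j - Q i j) ^ 2 ≤ ∑ j, (x j - w' j) ^ 2 := by
      have h := (hQ i).2 w' hw'mem
      have h2 := pow_le_pow_left₀ (norm_nonneg _) h 2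
      rw [normsq, normsq] at h2
      convert h2 using 2 <;> rfl
    have step3 : ∑ j, (x j - w' j) ^ 2 ≤ ∑ j, (X (i, j) - W (i, j)) ^ 2 := by
      apply Finset.sum_le_sum
      intro j _
      rw [hXval]
      by_cases hj : j ∈ N i <;> simp [hw'def, hj] <;> positivity
    linarith
  have hPeq : P = P' := uniq_min hC1conv hP.1 hP'mem hP.2 hP'min
  have hPval : ∀ i j, j ∈ N i → P (i, j) = Q i j := by
    intro i j hj; rw [hPeq]; simp [hP'def, hj]
  -- explicit formula for Z
  set a : Fin n → ℝ := fun j => (∑ i ∈ F j, P (i, j)) / (lcount N j : ℝ) with hadef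
  set Z' : EuclideanSpace ℝ (Fin m × Fin n) :=
    WithLp.toLp 2 (fun q => if q.2 ∈ N q.1 then a q.2 else 0) with hZ'def
  have hZ'mem : Z' ∈ C2set N := by
    constructor
    · intro i j hj; simp [hZ'def, hj]
    · intro i k j hj hk; simp [hZ'def, hj, hk]
  have hZ'min : ∀ W ∈ C2set N, ‖P - Z'‖ ≤ ‖P - W‖ := by
    intro W hW
    apply norm_le_of_sq
    rw [normsq, normsq]
    have hsub : ∀ (A B : EuclideanSpace ℝ (Fin m × Fin n)) (q : Fin m × Fin n),
        (A - B) q = A q - B q := fun A B q => rfl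
    simp only [hsub]
    rw [Fintype.sum_prod_type_right, Fintype.sum_prod_type_right]
    apply Finset.sum_le_sum
    intro j _
    obtain ⟨i0, hi0⟩ := hcov j
    have hWcol : ∀ i, j ∈ N i → W (i, j) = W (i0, j) := fun i hi => hW.2 i i0 j hi hi0
    rw [← Finset.sum_filter_add_sum_filter_not Finset.univ (fun i => j ∈ N i)
        (fun i => (P (i, j) - Z' (i, j)) ^ 2),
      ← Finset.sum_filter_add_sum_filter_not Finset.univ (fun i => j ∈ N i)
        (fun i => (P (i, j) - W (i, j)) ^ 2)]
    apply add_le_add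
    · have e1 : ∑ i ∈ F j, (P (i, j) - Z' (i, j)) ^ 2
          = ∑ i ∈ F j, (P (i, j) - (∑ i ∈ F j, P (i, j)) / (F j).card) ^ 2 := by
        apply Finset.sum_congr rfl
        intro i hi
        have hij : j ∈ N i := (Finset.mem_filter.mp hi).2
        rw [hcardF]
        simp [hZ'def, hadef, hij]
      have e2 : ∑ i ∈ F j, (P (i, j) - W (i, j)) ^ 2
          = ∑ i ∈ F j, (P (i, j) - W (i0, j)) ^ 2 := by
        apply Finset.sum_congr rfl
        intro i hi
        rw [hWcol i (Finset.mem_filter.mp hi).2]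
      rw [e1, e2]
      exact mean_min (F j) (hFne j) _ _
    · apply le_of_eq
      apply Finset.sum_congr rfl
      intro i hi
      have hij : j ∉ N i := by simpa using (Finset.mem_filter.mp hi).2
      rw [hW.1 i j hij]
      simp [hZ'def, hij]
  have hZeq : Z = Z' := uniq_min hC2conv hZ.1 hZ'mem hZ.2 hZ'min
  -- conclude
  intro j
  rw [hZeq]
  have hsum : ∑ i ∈ F j, Z' (i, j) = (lcount N j : ℝ) * a j := by
    rw [Finset.sum_congr rfl (fun i hi => by
      have hij : j ∈ N i := (Finset.mem_filter.mp hi).2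
      show Z' (i, j) = a j
      simp [hZ'def, hij]), Finset.sum_const, hcardF, nsmul_eq_mul]
  have hQP : ∑ i ∈ F j, Q i j = ∑ i ∈ F j, P (i, j) := by
    apply Finset.sum_congr rfl
    intro i hi
    exact (hPval i j (Finset.mem_filter.mp hi).2).symm
  show (∑ i ∈ F j, Z' (i, j)) / (lcount N j : ℝ) = _
  rw [hsum, hQP, hadef]
  field_simp
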